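/- Let A be an N×N real matrix with symmetric part A_s = (A+A^T)/2 and anti-symmetric part A_a = (A−A^T)/2. Write A_s = RS where R is symmetric positive semidefinite and S is orthogonal (polar decomposition). Then S is symmetric, S² = I, and Ax = ∇₁H(Sx, x) for all x ∈ ℝ^N, where H(x,y) = ½⟨Rx,x⟩ − ½⟨Ry,y⟩ − ⟨A_a x, y⟩. -/

import Mathlib

open Matrix

lemma toEuclideanLin_mul' {N : ℕ} (M P : Matrix (Fin N) (Fin N) ℝ) (x : EuclideanSpace ℝ (Fin N)) :
    Matrix.toEuclideanLin (M * P) x = Matrix.toEuclideanLin M (Matrix.toEuclideanLin P x) := by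
  simp [Matrix.toEuclideanLin_apply, mulVec_mulVec]

lemma inner_toEuclideanLin' {N : ℕ} (M : Matrix (Fin N) (Fin N) ℝ) (x y : EuclideanSpace ℝ (Fin N)) :
    (inner ℝ (Matrix.toEuclideanLin M x) y : ℝ) = inner ℝ x (Matrix.toEuclideanLin Mᵀ y) := by
  rw [show Mᵀ = Mᴴ by ext i j; simp [conjTranspose], Matrix.toEuclideanLin_conjTranspose_eq_adjoint]
  rw [LinearMap.adjoint_inner_right]

lemma gradient_aux {N : ℕ} (R B : Matrix (Fin N) (Fin N) ℝ) (hR : Rᵀ = R)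
    (x p : EuclideanSpace ℝ (Fin N)) (c : ℝ) :
    HasGradientAt
      (fun z : EuclideanSpace ℝ (Fin N) =>
        (1 / 2 : ℝ) * (inner ℝ (Matrix.toEuclideanLin R z) z : ℝ) - c
          - (inner ℝ (Matrix.toEuclideanLin B z) x : ℝ))
      (Matrix.toEuclideanLin R p - Matrix.toEuclideanLin Bᵀ x) p := by
  set Lr : EuclideanSpace ℝ (Fin N) →L[ℝ] EuclideanSpace ℝ (Fin N) :=
    LinearMap.toContinuousLinearMap (Matrix.toEuclideanLin R) with hLr
  set Lb : EuclideanSpace ℝ (Fin N) →L[ℝ] EuclideanSpace ℝ (Fin N) :=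
    LinearMap.toContinuousLinearMap (Matrix.toEuclideanLin B) with hLb
  set BB : EuclideanSpace ℝ (Fin N) →L[ℝ] EuclideanSpace ℝ (Fin N) →L[ℝ] ℝ :=
    (innerSL ℝ).comp Lr with hBB
  have hb : IsBoundedBilinearMap ℝ
      (fun q : EuclideanSpace ℝ (Fin N) × EuclideanSpace ℝ (Fin N) => BB q.1 q.2) :=
    BB.isBoundedBilinearMap
  have hdm : HasFDerivAt (fun z : EuclideanSpace ℝ (Fin N) => (z, z))
      ((ContinuousLinearMap.id ℝ (EuclideanSpace ℝ (Fin N))).prod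
        (ContinuousLinearMap.id ℝ (EuclideanSpace ℝ (Fin N)))) p :=
    (hasFDerivAt_id p).prodMk (hasFDerivAt_id p)
  have h1' : HasFDerivAt ((fun q : EuclideanSpace ℝ (Fin N) × EuclideanSpace ℝ (Fin N) => BB q.1 q.2) ∘ fun z : EuclideanSpace ℝ (Fin N) => (z, z))
      ((hb.deriv (p, p)).comp ((ContinuousLinearMap.id ℝ (EuclideanSpace ℝ (Fin N))).prod
        (ContinuousLinearMap.id ℝ (EuclideanSpace ℝ (Fin N))))) p :=
    HasFDerivAt.comp p (hb.hasFDerivAt (p, p)) hdm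
  have h1 : HasFDerivAt (fun z : EuclideanSpace ℝ (Fin N) => BB z z)
      ((hb.deriv (p, p)).comp ((ContinuousLinearMap.id ℝ (EuclideanSpace ℝ (Fin N))).prod
        (ContinuousLinearMap.id ℝ (EuclideanSpace ℝ (Fin N))))) p :=
    h1'
  set Ψ : EuclideanSpace ℝ (Fin N) →L[ℝ] ℝ := (innerSL ℝ x).comp Lb with hΨ
  have h2 : HasFDerivAt (fun z : EuclideanSpace ℝ (Fin N) => (Ψ z : ℝ)) Ψ p := Ψ.hasFDerivAt
  have h3 := ((h1.const_mul (1 / 2 : ℝ)).sub_const c).sub h2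
  rw [hasGradientAt_iff_hasFDerivAt]
  have hfun : (fun z : EuclideanSpace ℝ (Fin N) =>
        (1 / 2 : ℝ) * (inner ℝ (Matrix.toEuclideanLin R z) z : ℝ) - c
          - (inner ℝ (Matrix.toEuclideanLin B z) x : ℝ))
      = fun z : EuclideanSpace ℝ (Fin N) => (1 / 2 : ℝ) * BB z z - c - Ψ z := by
    funext z
    simp only [hBB, hΨ, ContinuousLinearMap.comp_apply, innerSL_apply_apply,
      LinearMap.coe_toContinuousLinearMap', hLr, hLb]
    rw [real_inner_comm x]
  rw [hfun]
  refine h3.congr_fderiv ?_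
  ext z
  simp only [ContinuousLinearMap.coe_comp', Function.comp_apply, ContinuousLinearMap.coe_sub',
    Pi.sub_apply, ContinuousLinearMap.coe_smul', Pi.smul_apply,
    InnerProductSpace.toDual_apply_apply, ContinuousLinearMap.prod_apply, ContinuousLinearMap.coe_id',
    id_eq, ContinuousLinearMap.sub_apply, smul_eq_mul]
  rw [hb.deriv_apply]
  simp only [hBB, hΨ, ContinuousLinearMap.comp_apply, innerSL_apply_apply,
    LinearMap.coe_toContinuousLinearMap', hLr, hLb]
  have e1 : (inner ℝ (Matrix.toEuclideanLin R z) p : ℝ) = inner ℝ (Matrix.toEuclideanLin R p) z := by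
    rw [inner_toEuclideanLin' R z p, hR, real_inner_comm]
  have e2 : (inner ℝ x (Matrix.toEuclideanLin B z) : ℝ) = inner ℝ (Matrix.toEuclideanLin Bᵀ x) z := by
    rw [real_inner_comm, inner_toEuclideanLin' B z x, real_inner_comm]
  rw [e1, e2, inner_sub_left]
  ring

/-- Any real `N × N` matrix `A` decomposes via the polar decomposition of its
symmetric part `A_s = (A + Aᵀ)/2 = R * S` (`R` symmetric positive semidefinite, `S`
orthogonal): `S` can be chosen symmetric with `S² = I`, and with
`H(x,y) = ½⟨Rx,x⟩ - ½⟨Ry,y⟩ - ⟨A_a x, y⟩` (where `A_a = (A - Aᵀ)/2`) one has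
`Ax = ∇₁H(Sx, x)` for all `x`. -/
theorem matrix_selfdual_factorization
    {N : ℕ} (A : Matrix (Fin N) (Fin N) ℝ) :
    ∃ R S : Matrix (Fin N) (Fin N) ℝ,
      R.IsSymm ∧ R.PosSemidef ∧ S * Sᵀ = 1 ∧
      (1 / 2 : ℝ) • (A + Aᵀ) = R * S ∧
      Sᵀ = S ∧ S * S = 1 ∧
      ∀ x : EuclideanSpace ℝ (Fin N),
        HasGradientAt
          (fun z : EuclideanSpace ℝ (Fin N) =>
            (1 / 2 : ℝ) * (inner ℝ (Matrix.toEuclideanLin R z) z : ℝ)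
              - (1 / 2 : ℝ) * (inner ℝ (Matrix.toEuclideanLin R x) x : ℝ)
              - (inner ℝ (Matrix.toEuclideanLin ((1 / 2 : ℝ) • (A - Aᵀ)) z) x : ℝ))
          (Matrix.toEuclideanLin A x)
          (Matrix.toEuclideanLin S x) := by
  set As : Matrix (Fin N) (Fin N) ℝ := (1 / 2 : ℝ) • (A + Aᵀ) with hAsdef
  have hAs : As.IsHermitian := by
    unfold Matrix.IsHermitian
    ext i j
    simp [As, conjTranspose, transpose, mul_comm, add_comm]
  set U : Matrix (Fin N) (Fin N) ℝ := (hAs.eigenvectorUnitary : Matrix (Fin N) (Fin N) ℝ) with hU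
  set μ : Fin N → ℝ := hAs.eigenvalues with hμ
  set s : Fin N → ℝ := fun i => if μ i < 0 then -1 else 1 with hs
  have hUU : star U * U = 1 := Matrix.UnitaryGroup.star_mul_self hAs.eigenvectorUnitary
  have hUU' : U * star U = 1 := Matrix.mem_unitaryGroup_iff.mp hAs.eigenvectorUnitary.2
  set R : Matrix (Fin N) (Fin N) ℝ := U * diagonal (fun i => |μ i|) * star U with hR
  set S : Matrix (Fin N) (Fin N) ℝ := U * diagonal s * star U with hS
  have hdiag : ∀ d : Fin N → ℝ, (U * diagonal d * star U)ᴴ = U * diagonal d * star U := by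
    intro d
    simp only [conjTranspose_mul, conjTranspose_conjTranspose, star]
    rw [diagonal_conjTranspose]
    simp [mul_assoc, Pi.star_def]
  have hmul : ∀ d e : Fin N → ℝ,
      (U * diagonal d * star U) * (U * diagonal e * star U) = U * diagonal (d * e) * star U := by
    intro d e
    calc (U * diagonal d * star U) * (U * diagonal e * star U)
        = U * diagonal d * (star U * U) * diagonal e * star U := by noncomm_ring
      _ = U * diagonal (d * e) * star U := by rw [hUU, mul_one, mul_assoc U, mul_assoc U, diagonal_mul_diagonal, ← mul_assoc]; rfl
  have hspec : As = U * diagonal μ * star U := by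
    have h := hAs.spectral_theorem
    rw [h, Unitary.conjStarAlgAut_apply]
    rfl
  have habs : (fun i => |μ i|) * s = μ := by
    funext i
    by_cases h : μ i < 0
    · simp [hs, Pi.mul_apply, h, abs_of_neg h]
    · simp [hs, Pi.mul_apply, h, abs_of_nonneg (not_lt.mp h)]
  have hs2 : s * s = 1 := by
    funext i
    by_cases h : μ i < 0 <;> simp [hs, Pi.mul_apply, h]
  have hRS : R * S = As := by
    rw [hR, hS, hmul, habs, ← hspec]
  have hRsymm : R.IsSymm := by
    have := hdiag (fun i => |μ i|)
    rw [← hR] at this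
    rwa [Matrix.conjTranspose_eq_transpose_of_trivial] at this
  have hSsymm : Sᵀ = S := by
    have := hdiag s
    rw [← hS] at this
    rwa [Matrix.conjTranspose_eq_transpose_of_trivial] at this
  have hSS : S * S = 1 := by
    rw [hS, hmul, hs2]
    rw [show diagonal (1 : Fin N → ℝ) = (1 : Matrix (Fin N) (Fin N) ℝ) from diagonal_one, mul_one, hUU']
  have hRpsd : R.PosSemidef := by
    have := (Matrix.posSemidef_diagonal_iff.mpr
      (fun i => abs_nonneg (μ i))).mul_mul_conjTranspose_same U
    rw [hR]
    rw [Matrix.star_eq_conjTranspose]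
    exact this

  refine ⟨R, S, hRsymm, hRpsd, by rw [hSsymm, hSS], by rw [hRS], hSsymm, hSS, ?_⟩
  intro x
  have hgrad := gradient_aux R ((1 / 2 : ℝ) • (A - Aᵀ)) hRsymm x
    (Matrix.toEuclideanLin S x) ((1 / 2 : ℝ) * (inner ℝ (Matrix.toEuclideanLin R x) x : ℝ))
  have key : Matrix.toEuclideanLin R (Matrix.toEuclideanLin S x)
      - Matrix.toEuclideanLin ((1 / 2 : ℝ) • (A - Aᵀ))ᵀ x = Matrix.toEuclideanLin A x := by
    rw [← toEuclideanLin_mul', hRS]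
    have hM : As - ((1 / 2 : ℝ) • (A - Aᵀ))ᵀ = A := by
      rw [hAsdef]
      ext i j
      simp [transpose_apply, Matrix.smul_apply, Matrix.add_apply, Matrix.sub_apply]
      ring
    calc Matrix.toEuclideanLin As x - Matrix.toEuclideanLin ((1 / 2 : ℝ) • (A - Aᵀ))ᵀ x
        = Matrix.toEuclideanLin (As - ((1 / 2 : ℝ) • (A - Aᵀ))ᵀ) x := by
          rw [map_sub]; rfl
      _ = Matrix.toEuclideanLin A x := by rw [hM]
  rw [key] at hgrad
  exact hgrad
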